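/- arXiv:1408.2111 — 2 statements merged into one kernel-verified Lean document; each statement's English description precedes it below -/
import Mathlib

section
/- Let K be a degree-3 number field, and let ω₁, ω₂ ∈ O_K be nonzero and linearly independent over ℚ; let 𝔡 be the ideal of O_K generated by ω₁ and ω₂. Let q ≥ 1 and a₁, a₂ be integers, k ≥ 1, and let 𝔭 be a prime ideal of O_K lying above a rational prime p, unramified over p, with N(𝔭) = p, and assume p ∤ q·N_{K/ℚ}(ω₁ω₂). For integers g₁, g₂ define S(g₁,g₂;𝔭^k) := Σ over integers 1 ≤ n₁, n₂ ≤ p^k such that 𝔭^k·𝔡 divides the principal ideal ((a₁+n₁q)ω₁ + (a₂+n₂q)ω₂)O_K, of e((g₁n₁ + g₂n₂)/p^k). Then: if 𝔭^k divides the principal ideal (g₂ω₁ − g₁ω₂)O_K, one has S(g₁,g₂;𝔭^k) = p^k · e(−(a₁g₁ + a₂g₂)·q̄ / p^k), where q̄ is the inverse of q modulo p^k; otherwise S(g₁,g₂;𝔭^k) = 0. -/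
open scoped BigOperators
open NumberField

noncomputable section

/-- `e(t) = exp(2πit)`. -/
def eC (t : ℝ) : ℂ := Complex.exp (2 * Real.pi * Complex.I * t)

/-- The exponential sum `S(g₁, g₂; 𝔭^k)`: the sum of `e((g₁n₁ + g₂n₂)/p^k)` over the pairs
`1 ≤ n₁, n₂ ≤ p^k` such that `𝔭^k · 𝔡` divides the principal ideal generated by
`(a₁+n₁q)ω₁ + (a₂+n₂q)ω₂`, where `𝔡` is the ideal generated by `ω₁, ω₂`. -/
def expSumS {K : Type} [Field K] [NumberField K] (ω₁ ω₂ : 𝓞 K)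
    (a₁ a₂ q g₁ g₂ : ℤ) (p k : ℕ) (𝔭 : Ideal (𝓞 K)) : ℂ :=
  ∑ᶠ (n : ℤ × ℤ) (_ : 1 ≤ n.1 ∧ n.1 ≤ (p : ℤ) ^ k ∧ 1 ≤ n.2 ∧ n.2 ≤ (p : ℤ) ^ k ∧
      (a₁ + n.1 * q) • ω₁ + (a₂ + n.2 * q) • ω₂ ∈ 𝔭 ^ k * Ideal.span {ω₁, ω₂}),
    eC (((g₁ * n.1 + g₂ * n.2 : ℤ) : ℝ) / (p : ℝ) ^ k)


lemma eC_add (a b : ℝ) : eC (a + b) = eC a * eC b := by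
  simp [eC, mul_add, Complex.exp_add]

lemma eC_int (m : ℤ) : eC m = 1 := by
  have : (2 * (Real.pi:ℂ) * Complex.I * (m:ℝ)) = (m:ℤ) * (2 * Real.pi * Complex.I) := by
    push_cast; ring
  rw [eC, this, Complex.exp_int_mul_two_pi_mul_I]

lemma eC_pow (a : ℝ) (n : ℕ) : (eC a) ^ n = eC (n * a) := by
  rw [eC, eC, ← Complex.exp_nat_mul]
  push_cast
  ring_nf

lemma eC_congr {P : ℤ} (hP : 0 < P) {m m' : ℤ} (h : P ∣ m - m') :
    eC ((m : ℝ) / (P : ℝ)) = eC ((m' : ℝ) / (P : ℝ)) := by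
  obtain ⟨c, hc⟩ := h
  have hP0 : (P : ℝ) ≠ 0 := by exact_mod_cast hP.ne'
  have h2 : (m : ℝ) / P = (m' : ℝ) / P + (c : ℤ) := by
    have h3 : (m : ℝ) = m' + P * c := by
      have : m = m' + P * c := by linarith
      exact_mod_cast congrArg (Int.cast : ℤ → ℝ) this
    rw [h3]; push_cast; field_simp
  rw [h2, eC_add, eC_int, mul_one]

lemma eC_ne_one {P : ℤ} (hP : 0 < P) {t : ℤ} (h : ¬ P ∣ t) :
    eC ((t : ℝ) / (P : ℝ)) ≠ 1 := by
  intro hone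
  rw [eC, Complex.exp_eq_one_iff] at hone
  obtain ⟨n, hn⟩ := hone
  have h2 : (2 * (Real.pi:ℂ) * Complex.I) ≠ 0 := by
    simp [Real.pi_ne_zero, Complex.I_ne_zero]
  have hP0 : (P : ℝ) ≠ 0 := by exact_mod_cast hP.ne'
  have hPC : ((P : ℝ) : ℂ) ≠ 0 := by exact_mod_cast hP0
  have heq : Complex.ofReal ((t : ℝ) / (P : ℝ)) = (n : ℂ) :=
    mul_left_cancel₀ h2 (hn.trans (mul_comm _ _))
  have ht : (t : ℝ) / (P : ℝ) = (n : ℝ) := by exact_mod_cast heq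
  have : (t : ℝ) = (n : ℝ) * (P : ℝ) := by field_simp at ht; linarith
  exact h ⟨n, by exact_mod_cast (by linarith : (t:ℝ) = (P:ℝ) * (n:ℝ))⟩

lemma sum_eC (P : ℤ) (hP : 0 < P) (t : ℤ) :
    ∑ n ∈ Finset.Icc (1:ℤ) P, eC (((t * n : ℤ) : ℝ) / (P : ℝ)) =
      if P ∣ t then (P : ℂ) else 0 := by
  have hP0 : (P : ℝ) ≠ 0 := by exact_mod_cast hP.ne'
  by_cases h : P ∣ t
  · rw [if_pos h]
    have : ∀ n ∈ Finset.Icc (1:ℤ) P, eC (((t * n : ℤ) : ℝ) / (P : ℝ)) = 1 := by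
      intro n _
      have : eC (((t * n : ℤ) : ℝ) / (P : ℝ)) = eC (((0 : ℤ) : ℝ) / (P : ℝ)) :=
        eC_congr hP (by simpa using h.mul_right n)
      rw [this]
      simpa using eC_int 0
    rw [Finset.sum_congr rfl this, Finset.sum_const, Int.card_Icc]
    simp only [nsmul_eq_mul, mul_one]
    have : ((P + 1 - 1).toNat : ℤ) = P := by omega
    exact_mod_cast congrArg (Int.cast : ℤ → ℂ) this
  · rw [if_neg h]
    set ζ : ℂ := eC ((t : ℝ) / (P : ℝ)) with hζ
    have hterm : ∀ n ∈ Finset.Icc (1:ℤ) P, eC (((t * n : ℤ) : ℝ) / (P : ℝ)) = ζ ^ n.toNat := by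
      intro n hn
      rw [Finset.mem_Icc] at hn
      rw [hζ, eC_pow]
      congr 1
      have : (n.toNat : ℝ) = (n : ℝ) := by exact_mod_cast (by omega : (n.toNat : ℤ) = n)
      rw [this]
      push_cast
      ring
    rw [Finset.sum_congr rfl hterm]
    have hbij : ∑ n ∈ Finset.Icc (1:ℤ) P, ζ ^ n.toNat = ∑ i ∈ Finset.range P.toNat, ζ ^ (i + 1) := by
      refine Finset.sum_nbij' (fun n => (n - 1).toNat) (fun i => (i : ℤ) + 1) ?_ ?_ ?_ ?_ ?_
      · intro a ha; rw [Finset.mem_Icc] at ha; rw [Finset.mem_range]; omega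
      · intro a ha; rw [Finset.mem_range] at ha; rw [Finset.mem_Icc]; omega
      · intro a ha; rw [Finset.mem_Icc] at ha; omega
      · intro a ha; rw [Finset.mem_range] at ha; omega
      · intro a ha; rw [Finset.mem_Icc] at ha; congr 1; omega
    rw [hbij]
    have hζ1 : ζ ≠ 1 := eC_ne_one hP h
    have hgeom : ∑ i ∈ Finset.range P.toNat, ζ ^ i = (ζ ^ P.toNat - 1) / (ζ - 1) :=
      geom_sum_eq hζ1 _
    have hζP : ζ ^ P.toNat = 1 := by
      rw [hζ, eC_pow]
      have : ((P.toNat : ℕ) : ℝ) * ((t : ℝ) / (P : ℝ)) = (t : ℝ) := by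
        have : ((P.toNat : ℕ) : ℝ) = (P : ℝ) := by exact_mod_cast (by omega : ((P.toNat : ℕ) : ℤ) = P)
        rw [this]; field_simp
      rw [this]; exact eC_int t
    calc ∑ i ∈ Finset.range P.toNat, ζ ^ (i + 1)
        = ζ * ∑ i ∈ Finset.range P.toNat, ζ ^ i := by
          rw [Finset.mul_sum]; exact Finset.sum_congr rfl fun i _ => by ring
      _ = 0 := by rw [hgeom, hζP]; simp

variable {K : Type} [Field K] [NumberField K]

lemma pmem {p : ℕ} (𝔭 : Ideal (𝓞 K)) (hnorm : Ideal.absNorm 𝔭 = p) :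
    ((p : ℕ) : 𝓞 K) ∈ 𝔭 := hnorm ▸ Ideal.absNorm_mem 𝔭

lemma pbot {p : ℕ} (hp : p.Prime) (𝔭 : Ideal (𝓞 K)) (hnorm : Ideal.absNorm 𝔭 = p) :
    𝔭 ≠ ⊥ := by
  intro h
  have := pmem 𝔭 hnorm
  rw [h, Ideal.mem_bot] at this
  have : (p : 𝓞 K) = 0 := this
  have hp0 : (p : ℕ) ≠ 0 := hp.ne_zero
  exact hp0 (by exact_mod_cast this)

lemma mem_p_iff {p : ℕ} (hp : p.Prime) (𝔭 : Ideal (𝓞 K)) (hprime : 𝔭.IsPrime)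
    (hnorm : Ideal.absNorm 𝔭 = p) (m : ℤ) : ((m : ℤ) : 𝓞 K) ∈ 𝔭 ↔ (p : ℤ) ∣ m := by
  constructor
  · intro h
    by_contra hnd
    have hcop : IsCoprime ((p : ℤ)) m := (Nat.prime_iff_prime_int.mp hp).coprime_iff_not_dvd.mpr hnd
    obtain ⟨u, v, huv⟩ := hcop
    have h1 : ((1 : ℤ) : 𝓞 K) ∈ 𝔭 := by
      rw [← huv]
      push_cast
      exact Ideal.add_mem _ (Ideal.mul_mem_left _ _ (by exact_mod_cast pmem 𝔭 hnorm))
        (Ideal.mul_mem_left _ _ h)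
    exact hprime.ne_top (Ideal.eq_top_of_isUnit_mem _ h1 (by norm_num))
  · rintro ⟨c, rfl⟩
    push_cast
    exact Ideal.mul_mem_right _ _ (by exact_mod_cast pmem 𝔭 hnorm)

lemma mem_pow_iff {p : ℕ} (hp : p.Prime) (𝔭 : Ideal (𝓞 K)) (hprime : 𝔭.IsPrime)
    (hnorm : Ideal.absNorm 𝔭 = p) (hunram : (p : 𝓞 K) ∉ 𝔭 ^ 2) (k : ℕ) (m : ℤ) :
    ((m : ℤ) : 𝓞 K) ∈ 𝔭 ^ k ↔ (p : ℤ) ^ k ∣ m := by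
  have hbot := pbot hp 𝔭 hnorm
  have hPrime : Prime 𝔭 := (Ideal.prime_iff_isPrime hbot).mpr hprime
  -- factor (p) = 𝔭 * c with 𝔭 ∤ c
  have hple : Ideal.span {((p : ℕ) : 𝓞 K)} ≤ 𝔭 := by
    rw [Ideal.span_singleton_le_iff_mem]; exact pmem 𝔭 hnorm
  obtain ⟨c, hc⟩ : 𝔭 ∣ Ideal.span {((p : ℕ) : 𝓞 K)} := Ideal.dvd_iff_le.mpr hple
  have hnc : ¬ 𝔭 ∣ c := by
    intro ⟨d, hd⟩
    apply hunram
    have : Ideal.span {((p : ℕ) : 𝓞 K)} = 𝔭 ^ 2 * d := by rw [hc, hd]; ring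
    have h2 : Ideal.span {((p : ℕ) : 𝓞 K)} ≤ 𝔭 ^ 2 := by rw [this]; exact Ideal.le_of_dvd (dvd_mul_right _ _)
    exact h2 (Ideal.mem_span_singleton_self _)
  induction k generalizing m with
  | zero => simp
  | succ n ih =>
    constructor
    · intro h
      have hm𝔭 : ((m : ℤ) : 𝓞 K) ∈ 𝔭 := Ideal.pow_le_self (Nat.succ_ne_zero n) h
      obtain ⟨m', rfl⟩ : (p : ℤ) ∣ m := (mem_p_iff hp 𝔭 hprime hnorm m).mp hm𝔭
      have hspan : 𝔭 ^ (n + 1) ∣ Ideal.span {((p : ℕ) : 𝓞 K)} * Ideal.span {((m' : ℤ) : 𝓞 K)} := by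
        rw [Ideal.span_singleton_mul_span_singleton, Ideal.dvd_iff_le,
          Ideal.span_singleton_le_iff_mem]
        exact_mod_cast h
      rw [hc, mul_assoc] at hspan
      have hcancel : 𝔭 ^ n ∣ c * Ideal.span {((m' : ℤ) : 𝓞 K)} := by
        have h1 : 𝔭 * 𝔭 ^ n ∣ 𝔭 * (c * Ideal.span {((m' : ℤ) : 𝓞 K)}) := by
          rwa [← pow_succ'] 
        exact (mul_dvd_mul_iff_left (by simpa using hbot : 𝔭 ≠ 0)).mp h1
      have h𝔭n : 𝔭 ^ n ∣ Ideal.span {((m' : ℤ) : 𝓞 K)} :=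
        hPrime.pow_dvd_of_dvd_mul_left n hnc hcancel
      have : ((m' : ℤ) : 𝓞 K) ∈ 𝔭 ^ n := by
        rw [← Ideal.span_singleton_le_iff_mem, ← Ideal.dvd_iff_le]; exact h𝔭n
      obtain ⟨e, he⟩ := (ih m').mp this
      exact ⟨e, by rw [he, pow_succ]; ring⟩
    · rintro ⟨e, rfl⟩
      push_cast
      exact Ideal.mul_mem_right _ _ (Ideal.pow_mem_pow (by exact_mod_cast pmem 𝔭 hnorm) _)

lemma exists_int_congr {p : ℕ} (hp : p.Prime) (𝔭 : Ideal (𝓞 K)) (hprime : 𝔭.IsPrime)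
    (hnorm : Ideal.absNorm 𝔭 = p) (hunram : (p : 𝓞 K) ∉ 𝔭 ^ 2) (k : ℕ) (ω : 𝓞 K) :
    ∃ w : ℤ, ω - (w : 𝓞 K) ∈ 𝔭 ^ k := by
  set φ : ℤ →+* (𝓞 K ⧸ 𝔭 ^ k) := (Ideal.Quotient.mk (𝔭 ^ k)).comp (Int.castRingHom (𝓞 K)) with hφ
  have hker : RingHom.ker φ = Ideal.span {((p : ℤ)) ^ k} := by
    ext m
    simp only [hφ, RingHom.mem_ker, RingHom.comp_apply, Int.coe_castRingHom,
      Ideal.Quotient.eq_zero_iff_mem, Ideal.mem_span_singleton]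
    rw [mem_pow_iff hp 𝔭 hprime hnorm hunram k m]
  have hcard1 : Nat.card (ℤ ⧸ RingHom.ker φ) = p ^ k := by
    rw [hker]
    have : ((p : ℤ)) ^ k = ((p ^ k : ℕ) : ℤ) := by push_cast; ring
    rw [this, Nat.card_congr (Int.quotientSpanNatEquivZMod (p ^ k)).toEquiv, Nat.card_zmod]
  have hcard2 : Nat.card (𝓞 K ⧸ 𝔭 ^ k) = p ^ k := by
    have : Ideal.absNorm (𝔭 ^ k) = p ^ k := by rw [map_pow, hnorm]
    rw [← this, Ideal.absNorm_apply, Submodule.cardQuot_apply]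
  have hfin : Finite (𝓞 K ⧸ 𝔭 ^ k) := by
    apply Nat.finite_of_card_ne_zero
    rw [hcard2]
    exact pow_ne_zero _ hp.ne_zero
  have hbij : Function.Bijective (RingHom.kerLift φ) :=
    (Nat.bijective_iff_injective_and_card _).mpr
      ⟨RingHom.kerLift_injective φ, by rw [hcard1, hcard2]⟩
  obtain ⟨x, hx⟩ := hbij.2 (Ideal.Quotient.mk (𝔭 ^ k) ω)
  obtain ⟨m, rfl⟩ := Ideal.Quotient.mk_surjective x
  refine ⟨m, ?_⟩
  rw [RingHom.kerLift_mk] at hx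
  have : Ideal.Quotient.mk (𝔭 ^ k) ((m : ℤ) : 𝓞 K) = Ideal.Quotient.mk (𝔭 ^ k) ω := hx
  exact (Ideal.Quotient.mk_eq_mk_iff_sub_mem ω ((m : ℤ) : 𝓞 K)).mp this.symm

lemma omega_not_mem {p : ℕ} (hp : p.Prime) (𝔭 : Ideal (𝓞 K)) (hprime : 𝔭.IsPrime)
    (hnorm : Ideal.absNorm 𝔭 = p) {q : ℤ} {ω₁ ω₂ : 𝓞 K}
    (hpq : ¬ ((p : ℤ) ∣ q * Algebra.norm ℤ (ω₁ * ω₂))) :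
    ω₁ ∉ 𝔭 ∧ ω₂ ∉ 𝔭 ∧ ¬ ((p : ℤ) ∣ q) := by
  have key : ∀ ω : 𝓞 K, Algebra.norm ℤ ω ∣ Algebra.norm ℤ (ω₁ * ω₂) → ω ∉ 𝔭 := by
    intro ω hdvd hmem
    apply hpq
    have h1 : Ideal.span {ω} ≤ 𝔭 := Ideal.span_le.mpr (by simpa using hmem)
    have h2 : p ∣ Ideal.absNorm (Ideal.span {ω}) := hnorm ▸ Ideal.absNorm_dvd_absNorm_of_le h1
    rw [Ideal.absNorm_span_singleton] at h2
    have h3 : (p : ℤ) ∣ ((Algebra.norm ℤ ω).natAbs : ℤ) := by exact_mod_cast h2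
    have h4 : (p : ℤ) ∣ Algebra.norm ℤ ω := h3.trans (Int.natAbs_dvd.mpr dvd_rfl)
    exact Dvd.dvd.mul_left (h4.trans hdvd) q
  refine ⟨key ω₁ ?_, key ω₂ ?_, fun h => hpq (h.mul_right _)⟩
  · rw [map_mul]; exact Dvd.intro _ rfl
  · rw [map_mul]; exact Dvd.intro_left _ rfl

lemma mem_mul_iff {p : ℕ} (hp : p.Prime) (𝔭 : Ideal (𝓞 K)) (hprime : 𝔭.IsPrime)
    (hnorm : Ideal.absNorm 𝔭 = p) {ω₁ ω₂ : 𝓞 K} (hω₁ : ω₁ ∉ 𝔭) (k : ℕ) (x y : ℤ) :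
    x • ω₁ + y • ω₂ ∈ 𝔭 ^ k * Ideal.span {ω₁, ω₂} ↔ x • ω₁ + y • ω₂ ∈ 𝔭 ^ k := by
  set 𝔡 : Ideal (𝓞 K) := Ideal.span {ω₁, ω₂} with h𝔡
  have hω₁𝔡 : ω₁ ∈ 𝔡 := Ideal.subset_span (Set.mem_insert _ _)
  have hω₂𝔡 : ω₂ ∈ 𝔡 := Ideal.subset_span (Set.mem_insert_of_mem _ rfl)
  have hz𝔡 : x • ω₁ + y • ω₂ ∈ 𝔡 :=
    Ideal.add_mem _ (zsmul_mem hω₁𝔡 x) (zsmul_mem hω₂𝔡 y)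
  have hbot := pbot hp 𝔭 hnorm
  have hmax : 𝔭.IsMaximal := hprime.isMaximal hbot
  have hsup : 𝔭 ⊔ 𝔡 = ⊤ := by
    have hlt : 𝔭 < 𝔭 ⊔ 𝔡 := lt_of_le_of_ne le_sup_left (fun h => hω₁ (h ▸ (le_sup_right : 𝔡 ≤ 𝔭 ⊔ 𝔡) hω₁𝔡))
    exact hmax.1.2 _ hlt
  have hcop : IsCoprime (𝔭 ^ k) 𝔡 :=
    ((Ideal.isCoprime_iff_sup_eq).mpr hsup).pow_left
  rw [← Ideal.inf_eq_mul_of_isCoprime hcop]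
  simp only [Submodule.mem_inf]
  exact ⟨fun h => h.1, fun h => ⟨h, hz𝔡⟩⟩

lemma smul_mem_pow_iff {p : ℕ} (hp : p.Prime) (𝔭 : Ideal (𝓞 K)) (hprime : 𝔭.IsPrime)
    (hnorm : Ideal.absNorm 𝔭 = p) (hunram : (p : 𝓞 K) ∉ 𝔭 ^ 2) (k : ℕ)
    {ω₁ ω₂ : 𝓞 K} {w₁ w₂ : ℤ} (hw₁ : ω₁ - (w₁ : 𝓞 K) ∈ 𝔭 ^ k) (hw₂ : ω₂ - (w₂ : 𝓞 K) ∈ 𝔭 ^ k)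
    (x y : ℤ) :
    x • ω₁ + y • ω₂ ∈ 𝔭 ^ k ↔ (p : ℤ) ^ k ∣ x * w₁ + y * w₂ := by
  have hdiff : (x • ω₁ + y • ω₂) - (((x * w₁ + y * w₂ : ℤ) : 𝓞 K)) =
      x • (ω₁ - (w₁ : 𝓞 K)) + y • (ω₂ - (w₂ : 𝓞 K)) := by
    push_cast
    simp only [zsmul_eq_mul]
    ring
  have hmem : (x • ω₁ + y • ω₂) - (((x * w₁ + y * w₂ : ℤ) : 𝓞 K)) ∈ 𝔭 ^ k := by
    rw [hdiff]
    exact Ideal.add_mem _ (zsmul_mem hw₁ x) (zsmul_mem hw₂ y)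
  rw [← mem_pow_iff hp 𝔭 hprime hnorm hunram k]
  constructor
  · intro h; have := Ideal.sub_mem _ h hmem; simpa using this
  · intro h; have := Ideal.add_mem _ h hmem; simpa using this

lemma eC_ne_zero (t : ℝ) : eC t ≠ 0 := Complex.exp_ne_zero _

theorem statement7
    (K : Type) [Field K] [NumberField K] (hdeg : Module.finrank ℚ K = 3)
    (ω₁ ω₂ : 𝓞 K) (hω₁ : ω₁ ≠ 0) (hω₂ : ω₂ ≠ 0)
    (hli : LinearIndependent ℚ ![((ω₁ : K)), ((ω₂ : K))])
    (q a₁ a₂ : ℤ) (hq : 1 ≤ q) (k : ℕ) (hk : 1 ≤ k)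
    (p : ℕ) (hp : p.Prime) (𝔭 : Ideal (𝓞 K)) (hprime : 𝔭.IsPrime)
    (hnorm : Ideal.absNorm 𝔭 = p) (hunram : (p : 𝓞 K) ∉ 𝔭 ^ 2)
    (hpq : ¬ ((p : ℤ) ∣ q * Algebra.norm ℤ (ω₁ * ω₂)))
    (g₁ g₂ : ℤ) :
    ((g₂ • ω₁ - g₁ • ω₂ ∈ 𝔭 ^ k) →
      ∀ qinv : ℤ, Int.ModEq ((p : ℤ) ^ k) (q * qinv) 1 →
        expSumS ω₁ ω₂ a₁ a₂ q g₁ g₂ p k 𝔭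
          = ((p : ℂ)) ^ k * eC (-(((a₁ * g₁ + a₂ * g₂) * qinv : ℤ) : ℝ) / (p : ℝ) ^ k)) ∧
    ((g₂ • ω₁ - g₁ • ω₂ ∉ 𝔭 ^ k) →
      expSumS ω₁ ω₂ a₁ a₂ q g₁ g₂ p k 𝔭 = 0) := by
  classical
  obtain ⟨hω₁p, hω₂p, hqp⟩ := omega_not_mem hp 𝔭 hprime hnorm hpq
  obtain ⟨w₁, hw₁⟩ := exists_int_congr hp 𝔭 hprime hnorm hunram k ω₁
  obtain ⟨w₂, hw₂⟩ := exists_int_congr hp 𝔭 hprime hnorm hunram k ω₂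
  set P : ℤ := (p : ℤ) ^ k with hPdef
  have hp0 : (0:ℤ) < (p:ℤ) := by exact_mod_cast hp.pos
  have hP : 0 < P := pow_pos hp0 k
  have hwp : ∀ w : ℤ, ∀ ω : 𝓞 K, ω - (w : 𝓞 K) ∈ 𝔭 ^ k → ω ∉ 𝔭 → ¬ (p:ℤ) ∣ w := by
    intro w ω hw hω h
    apply hω
    have h1 : ((w : ℤ) : 𝓞 K) ∈ 𝔭 := (mem_p_iff hp 𝔭 hprime hnorm w).mpr h
    have h2 : ω - (w : 𝓞 K) ∈ 𝔭 := Ideal.pow_le_self (by omega) hw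
    have := Ideal.add_mem _ h2 h1
    simpa using this
  have hw₁p : ¬ (p:ℤ) ∣ w₁ := hwp w₁ ω₁ hw₁ hω₁p
  have hw₂p : ¬ (p:ℤ) ∣ w₂ := hwp w₂ ω₂ hw₂ hω₂p
  have hpInt : Prime ((p:ℕ) : ℤ) := Nat.prime_iff_prime_int.mp hp
  have hpqw : ¬ (p:ℤ) ∣ q * w₁ := by
    intro h
    rcases hpInt.dvd_mul.mp h with h | h
    exacts [hqp h, hw₁p h]
  have hcop : IsCoprime (q * w₁) P := hpInt.irreducible.coprime_pow_of_not_dvd k hpqw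
  obtain ⟨s, v, hsv⟩ := hcop
  have hs : P ∣ q * w₁ * s - 1 := ⟨-v, by linear_combination hsv⟩
  have hcast : ∀ x : ℤ, P ∣ x ↔ ((x : ZMod (p ^ k))) = 0 := by
    intro x
    rw [ZMod.intCast_zmod_eq_zero_iff_dvd]
    have : ((p ^ k : ℕ) : ℤ) = P := by rw [hPdef]; push_cast; ring
    rw [this]
  have hsR : ((q : ZMod (p ^ k))) * (w₁ : ZMod (p ^ k)) * (s : ZMod (p ^ k)) - 1 = 0 := by
    have := (hcast _).mp hs
    push_cast at this
    linear_combination this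
  set A : ℤ := -(s * (a₁ * w₁ + a₂ * w₂)) with hA
  set C : ℤ := s * q * w₂ with hC
  set r : ℤ → ℤ := fun n₂ => (A - C * n₂ - 1) % P + 1 with hrdef
  have hr_mem : ∀ n₂ : ℤ, 1 ≤ r n₂ ∧ r n₂ ≤ P := by
    intro n₂
    have h1 := Int.emod_nonneg (A - C * n₂ - 1) hP.ne'
    have h2 := Int.emod_lt_of_pos (A - C * n₂ - 1) hP
    simp only [hrdef]
    omega
  have hr_mod : ∀ n₂ : ℤ, P ∣ r n₂ - (A - C * n₂) := by
    intro n₂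
    refine ⟨-((A - C * n₂ - 1) / P), ?_⟩
    simp only [hrdef]
    rw [Int.emod_def]
    ring
  have hcond_iff : ∀ n₁ n₂ : ℤ,
      (P ∣ ((a₁ + n₁ * q) * w₁ + (a₂ + n₂ * q) * w₂)) ↔ P ∣ (n₁ - (A - C * n₂)) := by
    intro n₁ n₂
    rw [hcast, hcast]
    simp only [hA, hC]
    push_cast
    constructor
    · intro h
      linear_combination (s : ZMod (p ^ k)) * h - (n₁ : ZMod (p ^ k)) * hsR
    · intro h
      linear_combination ((q : ZMod (p ^ k)) * (w₁ : ZMod (p ^ k))) * h -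
        ((a₁ : ZMod (p ^ k)) * w₁ + (a₂ : ZMod (p ^ k)) * w₂ +
          (q : ZMod (p ^ k)) * w₂ * n₂) * hsR
  have hcond : ∀ x y : ℤ,
      (x • ω₁ + y • ω₂ ∈ 𝔭 ^ k * Ideal.span {ω₁, ω₂}) ↔ P ∣ x * w₁ + y * w₂ := fun x y =>
    (mem_mul_iff hp 𝔭 hprime hnorm hω₁p k x y).trans
      (smul_mem_pow_iff hp 𝔭 hprime hnorm hunram k hw₁ hw₂ x y)
  set T : Finset (ℤ × ℤ) :=
    (Finset.Icc (1:ℤ) P ×ˢ Finset.Icc (1:ℤ) P).filter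
      (fun n => P ∣ ((a₁ + n.1 * q) * w₁ + (a₂ + n.2 * q) * w₂)) with hT
  have hmemT : ∀ n : ℤ × ℤ,
      (1 ≤ n.1 ∧ n.1 ≤ (p : ℤ) ^ k ∧ 1 ≤ n.2 ∧ n.2 ≤ (p : ℤ) ^ k ∧
        (a₁ + n.1 * q) • ω₁ + (a₂ + n.2 * q) • ω₂ ∈ 𝔭 ^ k * Ideal.span {ω₁, ω₂}) ↔ n ∈ T := by
    intro n
    rw [hT, Finset.mem_filter, Finset.mem_product, Finset.mem_Icc, Finset.mem_Icc,
      ← hcond (a₁ + n.1 * q) (a₂ + n.2 * q)]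
    tauto
  have h0 : expSumS ω₁ ω₂ a₁ a₂ q g₁ g₂ p k 𝔭 =
      ∑ n ∈ T, eC (((g₁ * n.1 + g₂ * n.2 : ℤ) : ℝ) / (p : ℝ) ^ k) :=
    finsum_cond_eq_sum_of_cond_iff _ (fun {x} _ => hmemT x)
  have hPr : ((P : ℤ) : ℝ) = (p : ℝ) ^ k := by rw [hPdef]; push_cast; ring
  have himage : T = (Finset.Icc (1:ℤ) P).image (fun n₂ => (r n₂, n₂)) := by
    ext n
    obtain ⟨n₁, n₂⟩ := n
    simp only [hT, Finset.mem_filter, Finset.mem_product, Finset.mem_Icc, Finset.mem_image]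
    constructor
    · rintro ⟨⟨⟨h11, h12⟩, h21, h22⟩, hdvd⟩
      refine ⟨n₂, ⟨h21, h22⟩, ?_⟩
      have hcong : P ∣ n₁ - r n₂ := by
        have hh := (hcond_iff n₁ n₂).mp hdvd
        have h3 : n₁ - r n₂ = (n₁ - (A - C * n₂)) - (r n₂ - (A - C * n₂)) := by ring
        rw [h3]
        exact dvd_sub hh (hr_mod n₂)
      have habs : |n₁ - r n₂| < P := by
        have := hr_mem n₂
        rw [abs_lt]
        omega
      have h4 : n₁ = r n₂ := by
        have := Int.eq_zero_of_abs_lt_dvd hcong habs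
        omega
      simp [h4]
    · rintro ⟨m, ⟨hm1, hm2⟩, heq⟩
      rw [Prod.mk.injEq] at heq
      obtain ⟨h1', h2'⟩ := heq
      subst h1'
      subst h2'
      refine ⟨⟨(hr_mem m), hm1, hm2⟩, ?_⟩
      exact (hcond_iff (r m) m).mpr (hr_mod m)
  have hsplit : ∀ x y : ℤ, eC (((x + y : ℤ) : ℝ) / ((P : ℤ) : ℝ)) =
      eC ((x : ℝ) / ((P : ℤ) : ℝ)) * eC ((y : ℝ) / ((P : ℤ) : ℝ)) := by
    intro x y
    rw [← eC_add]
    congr 1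
    push_cast
    ring
  have hS : expSumS ω₁ ω₂ a₁ a₂ q g₁ g₂ p k 𝔭 =
      eC (((g₁ * A : ℤ) : ℝ) / ((P : ℤ) : ℝ)) *
        (if P ∣ (g₂ - g₁ * C) then ((P : ℤ) : ℂ) else 0) := by
    rw [h0, himage, Finset.sum_image (by
      intro x _ y _ h
      exact congrArg Prod.snd h)]
    have hterm : ∀ m ∈ Finset.Icc (1:ℤ) P,
        eC (((g₁ * (r m, m).1 + g₂ * (r m, m).2 : ℤ) : ℝ) / (p : ℝ) ^ k) =
          eC (((g₁ * A : ℤ) : ℝ) / ((P : ℤ) : ℝ)) *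
            eC ((((g₂ - g₁ * C) * m : ℤ) : ℝ) / ((P : ℤ) : ℝ)) := by
      intro m _
      rw [← hPr]
      have hcongr : eC (((g₁ * (r m, m).1 + g₂ * (r m, m).2 : ℤ) : ℝ) / ((P : ℤ) : ℝ)) =
          eC (((g₁ * A + (g₂ - g₁ * C) * m : ℤ) : ℝ) / ((P : ℤ) : ℝ)) := by
        apply eC_congr hP
        have h3 : (g₁ * (r m, m).1 + g₂ * (r m, m).2) - (g₁ * A + (g₂ - g₁ * C) * m) =
            g₁ * (r m - (A - C * m)) := by
          simp only []
          ring
        rw [h3]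
        exact (hr_mod m).mul_left g₁
      rw [hcongr, hsplit]
    rw [Finset.sum_congr rfl hterm, ← Finset.mul_sum, sum_eC P hP (g₂ - g₁ * C)]
  have hgiff : (g₂ • ω₁ - g₁ • ω₂ ∈ 𝔭 ^ k) ↔ P ∣ (g₂ * w₁ - g₁ * w₂) := by
    have h1 : g₂ • ω₁ - g₁ • ω₂ = g₂ • ω₁ + (-g₁) • ω₂ := by
      rw [sub_eq_add_neg, neg_smul]
    rw [h1, smul_mem_pow_iff hp 𝔭 hprime hnorm hunram k hw₁ hw₂ g₂ (-g₁)]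
    constructor <;> intro ⟨c, hc⟩ <;> exact ⟨c, by linarith⟩
  have hdvd_iff : P ∣ (g₂ - g₁ * C) ↔ P ∣ (g₂ * w₁ - g₁ * w₂) := by
    rw [hcast, hcast]
    simp only [hC]
    push_cast
    constructor
    · intro h
      linear_combination (w₁ : ZMod (p ^ k)) * h + (g₁ : ZMod (p ^ k)) * w₂ * hsR
    · intro h
      linear_combination (s : ZMod (p ^ k)) * q * h - (g₂ : ZMod (p ^ k)) * hsR
  constructor
  · intro hg qinv hqinv
    have hgw : P ∣ g₂ * w₁ - g₁ * w₂ := hgiff.mp hg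
    have ht : P ∣ g₂ - g₁ * C := hdvd_iff.mpr hgw
    have hq' : P ∣ q * qinv - 1 := by
      have := Int.ModEq.dvd hqinv
      exact (dvd_sub_comm).mp this
    have hfinal : P ∣ g₁ * A - (-((a₁ * g₁ + a₂ * g₂) * qinv)) := by
      rw [hcast]
      simp only [hA]
      push_cast
      have hqZ : ((q : ZMod (p ^ k))) * (qinv : ZMod (p ^ k)) - 1 = 0 := by
        have := (hcast _).mp hq'
        push_cast at this
        linear_combination this
      have hgZ : ((g₂ : ZMod (p ^ k))) * (w₁ : ZMod (p ^ k)) -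
          (g₁ : ZMod (p ^ k)) * (w₂ : ZMod (p ^ k)) = 0 := by
        have := (hcast _).mp hgw
        push_cast at this
        linear_combination this
      linear_combination ((a₁ : ZMod (p ^ k)) * g₁ + a₂ * g₂) * w₁ * s * hqZ -
        ((a₁ : ZMod (p ^ k)) * g₁ + a₂ * g₂) * qinv * hsR + (s : ZMod (p ^ k)) * a₂ * hgZ
    rw [hS, if_pos ht]
    have heq : eC (((g₁ * A : ℤ) : ℝ) / ((P : ℤ) : ℝ)) =
        eC (-(((a₁ * g₁ + a₂ * g₂) * qinv : ℤ) : ℝ) / (p : ℝ) ^ k) := by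
      rw [← hPr]
      have : -(((a₁ * g₁ + a₂ * g₂) * qinv : ℤ) : ℝ) =
          (((-((a₁ * g₁ + a₂ * g₂) * qinv)) : ℤ) : ℝ) := by push_cast; ring
      rw [this]
      exact eC_congr hP hfinal
    rw [heq]
    have hPC : ((P : ℤ) : ℂ) = (p : ℂ) ^ k := by rw [hPdef]; push_cast; ring
    rw [hPC]
    ring
  · intro hg
    have ht : ¬ P ∣ g₂ - g₁ * C := fun h => hg (hgiff.mpr (hdvd_iff.mp h))
    rw [hS, if_neg ht, mul_zero]


end
end

section
/- Let K be a degree-3 number field with ring of integers O_K. Let d ≥ 1 be a squarefree integer and 𝔧 a nonzero ideal of O_K. Then μ(d) · Σ_{𝔦} μ_K(𝔦) = 1 if d divides N(𝔧), and = 0 otherwise, where the (finite) sum runs over the nonzero ideals 𝔦 of O_K dividing 𝔧 + dO_K (the gcd of 𝔧 and dO_K) and such that d divides N(𝔦). -/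
open scoped BigOperators
open NumberField UniqueFactorizationMonoid

noncomputable section

attribute [local instance] Classical.propDecidable

set_option synthInstance.maxHeartbeats 1000000
set_option maxHeartbeats 1000000

/-- The Möbius function on nonzero ideals of the ring of integers of a number field:
`(-1)^r` on squarefree ideals that are products of `r` distinct prime ideals, and `0` on ideals
divisible by the square of a prime ideal. -/
def muK {K : Type} [Field K] [NumberField K] (I : Ideal (𝓞 K)) : ℤ :=
  if Squarefree I then (-1) ^ (normalizedFactors I).card else 0

section helpers
variable {K : Type} [Field K] [NumberField K]

lemma natCast_mem_of_prime_dvd_absNorm' {P : Ideal (𝓞 K)} (hP : P.IsPrime) (hP0 : P ≠ ⊥)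
    {p : ℕ} (hp : p.Prime) (hdvd : p ∣ Ideal.absNorm P) : (p : 𝓞 K) ∈ P := by
  have hN0 : Ideal.absNorm P ≠ 0 := fun h => hP0 (Ideal.absNorm_eq_zero_iff.mp h)
  have hfin : Finite ((𝓞 K) ⧸ P) := (Ideal.absNorm_ne_zero_iff P).mp hN0
  haveI : Fintype ((𝓞 K) ⧸ P) := Fintype.ofFinite _
  haveI : Fact p.Prime := ⟨hp⟩
  have hcard : p ∣ Fintype.card ((𝓞 K) ⧸ P) := by
    rwa [← Nat.card_eq_fintype_card, ← Submodule.cardQuot_apply, ← Ideal.absNorm_apply]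
  obtain ⟨x, hx⟩ := exists_prime_addOrderOf_dvd_card (G := (𝓞 K) ⧸ P) p hcard
  have hx0 : x ≠ 0 := by
    intro h; rw [h, addOrderOf_zero] at hx; exact hp.one_lt.ne hx
  have hpx : (p : (𝓞 K) ⧸ P) * x = 0 := by
    rw [← nsmul_eq_mul, ← hx, addOrderOf_nsmul_eq_zero]
  haveI : IsDomain ((𝓞 K) ⧸ P) := Ideal.Quotient.isDomain P
  rcases mul_eq_zero.mp hpx with h | h
  · rwa [← map_natCast (Ideal.Quotient.mk P), Ideal.Quotient.eq_zero_iff_mem] at h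
  · exact absurd h hx0

lemma bezout_mem {P : Ideal (𝓞 K)} (hP : P ≠ ⊤) {a b : ℕ}
    (ha : (a : 𝓞 K) ∈ P) (hb : (b : 𝓞 K) ∈ P) : Nat.gcd a b ≠ 1 := by
  intro hcop
  have hbez := Nat.gcd_eq_gcd_ab a b
  rw [hcop] at hbez
  have h1 : (1 : 𝓞 K) ∈ P := by
    have h : ((1 : ℤ) : 𝓞 K)
        = (Nat.gcdA a b : 𝓞 K) * (a : 𝓞 K) + (Nat.gcdB a b : 𝓞 K) * (b : 𝓞 K) := by
      have h2 := congrArg (fun z : ℤ => (z : 𝓞 K)) hbez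
      push_cast at h2 ⊢
      linear_combination h2
    rw [show ((1 : ℤ) : 𝓞 K) = 1 by push_cast; ring] at h
    rw [h]
    exact P.add_mem (P.mul_mem_left _ ha) (P.mul_mem_left _ hb)
  exact hP (P.eq_top_iff_one.mpr h1)

lemma sum_powerset_union_disj {α M : Type*} [DecidableEq α] [AddCommMonoid M]
    (F₁ : Finset α) {F₂ : Finset α} (h : Disjoint F₁ F₂) (f : Finset α → M) :
    ∑ T ∈ (F₁ ∪ F₂).powerset, f T
      = ∑ T₁ ∈ F₁.powerset, ∑ T₂ ∈ F₂.powerset, f (T₁ ∪ T₂) := by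
  induction F₁ using Finset.induction generalizing f with
  | empty => simp
  | @insert a s ha ih =>
    have hd : Disjoint s F₂ := h.mono_left (Finset.subset_insert a s)
    have haF : a ∉ s ∪ F₂ := by
      simp only [Finset.mem_union, not_or]
      exact ⟨ha, Finset.disjoint_left.mp h (Finset.mem_insert_self a s)⟩
    rw [Finset.insert_union, Finset.sum_powerset_insert haF, ih hd f, ih hd (fun T => f (insert a T)),
      Finset.sum_powerset_insert ha]
    congr 1
    exact Finset.sum_congr rfl fun T₁ _ => Finset.sum_congr rfl fun T₂ _ => by
      rw [Finset.insert_union]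

lemma lemA' {α β : Type*} [DecidableEq α] [DecidableEq β] (Q : Finset β) (F : Finset α)
    (π : α → β) (hπ : ∀ a ∈ F, π a ∈ Q) :
    ∑ T ∈ F.powerset, (if (∀ q ∈ Q, ∃ a ∈ T, π a = q) then ((-1 : ℤ) ^ T.card) else 0)
      = if (∀ q ∈ Q, ∃ a ∈ F, π a = q) then (-1) ^ Q.card else 0 := by
  induction Q using Finset.induction generalizing F with
  | empty =>
    have hF : F = ∅ := Finset.eq_empty_of_forall_notMem fun a ha => by simpa using hπ a ha
    subst hF; simp
  | @insert q Q₀ hq ih =>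
    set F₁ := F.filter (fun a => π a = q) with hF₁
    set F₂ := F.filter (fun a => π a ≠ q) with hF₂
    have hdisj : Disjoint F₁ F₂ := Finset.disjoint_filter_filter_not F F _
    have hFu : F₁ ∪ F₂ = F := Finset.filter_union_filter_not_eq _ F
    have hπ₂ : ∀ a ∈ F₂, π a ∈ Q₀ := by
      intro a ha
      obtain ⟨haF, hane⟩ := Finset.mem_filter.mp ha
      rcases Finset.mem_insert.mp (hπ a haF) with h | h
      · exact absurd h hane
      · exact h
    -- key equivalence for subsets
    have key : ∀ T₁ ∈ F₁.powerset, ∀ T₂ ∈ F₂.powerset,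
        ((∀ q' ∈ insert q Q₀, ∃ a ∈ T₁ ∪ T₂, π a = q')
          ↔ (T₁.Nonempty ∧ ∀ q' ∈ Q₀, ∃ a ∈ T₂, π a = q')) := by
      intro T₁ h₁ T₂ h₂
      rw [Finset.mem_powerset] at h₁ h₂
      constructor
      · intro h
        constructor
        · obtain ⟨a, haT, hπa⟩ := h q (Finset.mem_insert_self _ _)
          rcases Finset.mem_union.mp haT with h' | h'
          · exact ⟨a, h'⟩
          · exact absurd hπa (Finset.mem_filter.mp (h₂ h')).2
        · intro q' hq'
          obtain ⟨a, haT, hπa⟩ := h q' (Finset.mem_insert_of_mem hq')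
          rcases Finset.mem_union.mp haT with h' | h'
          · exfalso
            have := (Finset.mem_filter.mp (h₁ h')).2
            rw [hπa] at this; subst this; exact hq hq'
          · exact ⟨a, h', hπa⟩
      · rintro ⟨⟨a, ha⟩, h⟩ q' hq'
        rcases Finset.mem_insert.mp hq' with rfl | h'
        · exact ⟨a, Finset.mem_union_left _ ha, (Finset.mem_filter.mp (h₁ ha)).2⟩
        · obtain ⟨b, hb, hπb⟩ := h q' h'
          exact ⟨b, Finset.mem_union_right _ hb, hπb⟩
    have hcard : ∀ T₁ ∈ F₁.powerset, ∀ T₂ ∈ F₂.powerset,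
        (T₁ ∪ T₂).card = T₁.card + T₂.card := by
      intro T₁ h₁ T₂ h₂
      rw [Finset.mem_powerset] at h₁ h₂
      exact Finset.card_union_of_disjoint (hdisj.mono h₁ h₂)
    calc ∑ T ∈ F.powerset, (if (∀ q' ∈ insert q Q₀, ∃ a ∈ T, π a = q')
            then ((-1 : ℤ) ^ T.card) else 0)
        = ∑ T₁ ∈ F₁.powerset, ∑ T₂ ∈ F₂.powerset,
            (if T₁.Nonempty then ((-1:ℤ) ^ T₁.card) else 0) *
            (if (∀ q' ∈ Q₀, ∃ a ∈ T₂, π a = q') then ((-1:ℤ) ^ T₂.card) else 0) := by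
          rw [← hFu, sum_powerset_union_disj F₁ hdisj]
          refine Finset.sum_congr rfl fun T₁ h₁ => Finset.sum_congr rfl fun T₂ h₂ => ?_
          rw [hcard T₁ h₁ T₂ h₂, pow_add]
          by_cases hc : (∀ q' ∈ insert q Q₀, ∃ a ∈ T₁ ∪ T₂, π a = q')
          · obtain ⟨hne, hall⟩ := (key T₁ h₁ T₂ h₂).mp hc
            rw [if_pos hc, if_pos hne, if_pos hall]
          · rw [if_neg hc]
            rcases not_and_or.mp (fun hh => hc ((key T₁ h₁ T₂ h₂).mpr hh)) with h | h
            · rw [if_neg h, zero_mul]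
            · rw [if_neg h, mul_zero]
      _ = (∑ T₁ ∈ F₁.powerset, (if T₁.Nonempty then ((-1:ℤ) ^ T₁.card) else 0)) *
            (∑ T₂ ∈ F₂.powerset, (if (∀ q' ∈ Q₀, ∃ a ∈ T₂, π a = q')
              then ((-1:ℤ) ^ T₂.card) else 0)) := by
          rw [Finset.sum_mul_sum]
      _ = (if F₁ = ∅ then 0 else -1) *
            (if (∀ q' ∈ Q₀, ∃ a ∈ F₂, π a = q') then (-1:ℤ) ^ Q₀.card else 0) := by
          rw [ih F₂ hπ₂]
          congr 1
          have : ∀ T₁ ∈ F₁.powerset, (if T₁.Nonempty then ((-1:ℤ) ^ T₁.card) else 0)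
              = (-1:ℤ) ^ T₁.card - (if T₁ = ∅ then 1 else 0) := by
            intro T₁ _
            by_cases h : T₁ = ∅
            · subst h; simp
            · rw [if_pos (Finset.nonempty_of_ne_empty h), if_neg h, sub_zero]
          rw [Finset.sum_congr rfl this, Finset.sum_sub_distrib,
            Finset.sum_powerset_neg_one_pow_card, Finset.sum_ite_eq'
              F₁.powerset (∅ : Finset α) (fun _ => (1:ℤ))]
          simp only [Finset.empty_mem_powerset, if_true]
          by_cases h : F₁ = ∅ <;> simp [h]
      _ = _ := by
          have hiff : (∀ q' ∈ insert q Q₀, ∃ a ∈ F, π a = q')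
              ↔ (F₁.Nonempty ∧ ∀ q' ∈ Q₀, ∃ a ∈ F₂, π a = q') := by
            rw [← hFu]
            exact key F₁ (Finset.mem_powerset_self _) F₂ (Finset.mem_powerset_self _)
          rw [Finset.card_insert_of_notMem hq]
          by_cases hc : (∀ q' ∈ insert q Q₀, ∃ a ∈ F, π a = q')
          · obtain ⟨hne, hall⟩ := hiff.mp hc
            rw [if_pos hc, if_neg (Finset.nonempty_iff_ne_empty.mp hne), if_pos hall, pow_succ]
            ring
          · rw [if_neg hc]
            rcases not_and_or.mp (fun hh => hc (hiff.mpr hh)) with h | h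
            · rw [if_pos (Finset.not_nonempty_iff_eq_empty.mp h), zero_mul]
            · rw [if_neg h, mul_zero]

end helpers

theorem statement9
    (K : Type) [Field K] [NumberField K] (hdeg : Module.finrank ℚ K = 3)
    (d : ℕ) (hd : 1 ≤ d) (hsq : Squarefree d)
    (J : Ideal (𝓞 K)) (hJ : J ≠ ⊥) :
    ((d ∣ Ideal.absNorm J) →
      (ArithmeticFunction.moebius d : ℤ) *
          (∑ᶠ (I : Ideal (𝓞 K))
            (_ : I ≠ ⊥ ∧ I ∣ (J ⊔ Ideal.span {(d : 𝓞 K)}) ∧ d ∣ Ideal.absNorm I), muK I)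
        = 1) ∧
    (¬ (d ∣ Ideal.absNorm J) →
      (ArithmeticFunction.moebius d : ℤ) *
          (∑ᶠ (I : Ideal (𝓞 K))
            (_ : I ≠ ⊥ ∧ I ∣ (J ⊔ Ideal.span {(d : 𝓞 K)}) ∧ d ∣ Ideal.absNorm I), muK I)
        = 0) := by
  have hd0 : d ≠ 0 := Nat.one_le_iff_ne_zero.mp hd
  set G : Ideal (𝓞 K) := J ⊔ Ideal.span {(d : 𝓞 K)} with hGdef
  have hG0 : G ≠ ⊥ := fun h => hJ (le_bot_iff.mp (h ▸ (le_sup_left : J ≤ G)))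
  have hG0' : G ≠ 0 := by rwa [Submodule.zero_eq_bot]
  have hGJ : G ∣ J := Ideal.dvd_iff_le.mpr le_sup_left
  have hGd : G ∣ Ideal.span {(d : 𝓞 K)} := Ideal.dvd_iff_le.mpr le_sup_right
  set F : Finset (Ideal (𝓞 K)) := (normalizedFactors G).toFinset with hFdef
  have hFprime : ∀ P ∈ F, Prime P := fun P hP =>
    prime_of_normalized_factor P (Multiset.mem_toFinset.mp hP)
  have hFdvdG : ∀ P ∈ F, P ∣ G := fun P hP =>
    dvd_of_mem_normalizedFactors (Multiset.mem_toFinset.mp hP)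
  have hFne : ∀ P ∈ F, P ≠ ⊥ := fun P hP => by
    have := (hFprime P hP).ne_zero; rwa [Submodule.zero_eq_bot] at this
  have hFnorm1 : ∀ P ∈ F, Ideal.absNorm P ≠ 1 := by
    intro P hP h1
    exact (hFprime P hP).not_unit (Ideal.isUnit_iff.mpr (Ideal.absNorm_eq_one_iff.mp h1))
  -- q ∣ N P and q prime implies q ∣ d, for P ∈ F
  have hqd : ∀ P ∈ F, ∀ q : ℕ, q.Prime → q ∣ Ideal.absNorm P → q ∣ d := by
    intro P hP q hq hdvd
    by_contra hnd
    have hPprime : P.IsPrime := Ideal.isPrime_of_prime (hFprime P hP)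
    have h1 : (q : 𝓞 K) ∈ P := natCast_mem_of_prime_dvd_absNorm' hPprime (hFne P hP) hq hdvd
    have h2 : (d : 𝓞 K) ∈ P := by
      have : P ∣ Ideal.span {(d : 𝓞 K)} := dvd_trans (hFdvdG P hP) hGd
      exact (Ideal.dvd_iff_le.mp this) (Ideal.mem_span_singleton_self _)
    exact bezout_mem hPprime.ne_top h1 h2 ((Nat.Prime.coprime_iff_not_dvd hq).mpr hnd)
  set π : Ideal (𝓞 K) → ℕ := fun P => (Ideal.absNorm P).minFac with hπdef
  have hπ_spec : ∀ P ∈ F, ∀ q : ℕ, q.Prime → (q ∣ Ideal.absNorm P ↔ π P = q) := by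
    intro P hP q hq
    constructor
    · intro hdvd
      have hm : (π P).Prime := Nat.minFac_prime (hFnorm1 P hP)
      have hmd : π P ∣ Ideal.absNorm P := Nat.minFac_dvd _
      by_contra hne
      have hPprime : P.IsPrime := Ideal.isPrime_of_prime (hFprime P hP)
      have h1 := natCast_mem_of_prime_dvd_absNorm' hPprime (hFne P hP) hq hdvd
      have h2 := natCast_mem_of_prime_dvd_absNorm' hPprime (hFne P hP) hm hmd
      exact bezout_mem hPprime.ne_top h1 h2 ((Nat.coprime_primes hq hm).mpr (fun h => hne (h ▸ rfl)))
    · rintro rfl; exact Nat.minFac_dvd _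
  have hπQ : ∀ P ∈ F, π P ∈ d.primeFactors := by
    intro P hP
    have hm : (π P).Prime := Nat.minFac_prime (hFnorm1 P hP)
    exact Nat.mem_primeFactors.mpr ⟨hm, hqd P hP _ hm (Nat.minFac_dvd _), hd0⟩
  -- finiteness of the index set
  have hsetfin : {I : Ideal (𝓞 K) | I ≠ ⊥ ∧ I ∣ G ∧ d ∣ Ideal.absNorm I}.Finite := by
    have h1 : {I : Ideal (𝓞 K) | I ∣ G}.Finite :=
      Set.finite_coe_iff.mp
        (@Finite.of_fintype _ (UniqueFactorizationMonoid.fintypeSubtypeDvd G hG0'))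
    exact h1.subset fun I hI => hI.2.1
  -- the key computation
  have hS : (∑ᶠ (I : Ideal (𝓞 K))
        (_ : I ≠ ⊥ ∧ I ∣ G ∧ d ∣ Ideal.absNorm I), muK I)
      = if d ∣ Ideal.absNorm J then (-1 : ℤ) ^ d.primeFactors.card else 0 := by
    have hre : (∑ᶠ (I : Ideal (𝓞 K)) (_ : I ≠ ⊥ ∧ I ∣ G ∧ d ∣ Ideal.absNorm I), muK I)
        = ∑ᶠ I ∈ {I : Ideal (𝓞 K) | I ≠ ⊥ ∧ I ∣ G ∧ d ∣ Ideal.absNorm I}, muK I := rfl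
    rw [hre, finsum_mem_eq_finite_toFinset_sum _ hsetfin]
    have prodeq : ∀ I : Ideal (𝓞 K), I ≠ 0 → Squarefree I →
        (normalizedFactors I).toFinset.prod id = I := by
      intro I hI0 hsf
      have hnd : (normalizedFactors I).Nodup :=
        (squarefree_iff_nodup_normalizedFactors hI0).mp hsf
      rw [Finset.prod_eq_multiset_prod, Multiset.toFinset_val, Multiset.dedup_eq_self.mpr hnd,
        Multiset.map_id]
      exact associated_iff_eq.mp (prod_normalizedFactors hI0)
    have factors_of_prod : ∀ T : Finset (Ideal (𝓞 K)), T ⊆ F →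
        normalizedFactors (T.prod id) = T.val := by
      intro T hT
      have h1 : T.prod id = (T.val.map id).prod := rfl
      rw [h1, Multiset.map_id]
      exact normalizedFactors_prod_of_prime (fun P hP => hFprime P (hT hP))
    have step1 : ∑ I ∈ hsetfin.toFinset, muK I
        = ∑ T ∈ F.powerset,
            (if d ∣ Ideal.absNorm (T.prod id) then ((-1 : ℤ) ^ T.card) else 0) := by
      rw [← Finset.sum_filter_add_sum_filter_not hsetfin.toFinset Squarefree muK]
      have h2 : ∑ I ∈ hsetfin.toFinset.filter (fun I => ¬ Squarefree I), muK I = 0 :=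
        Finset.sum_eq_zero fun I hI => by
          rw [muK, if_neg (Finset.mem_filter.mp hI).2]
      rw [h2, add_zero, ← Finset.sum_filter]
      refine Finset.sum_bij' (fun I _ => (normalizedFactors I).toFinset)
        (fun T _ => T.prod id) ?_ ?_ ?_ ?_ ?_
      · intro I hI
        obtain ⟨hImem, hIsf⟩ := Finset.mem_filter.mp hI
        obtain ⟨hIne, hIdvd, hIN⟩ := hsetfin.mem_toFinset.mp hImem
        have hI0 : I ≠ 0 := by rwa [Submodule.zero_eq_bot]
        rw [Finset.mem_filter, Finset.mem_powerset]
        constructor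
        · refine Multiset.toFinset_subset.mpr (Multiset.subset_of_le ?_)
          exact ((dvd_iff_normalizedFactors_le_normalizedFactors hI0 hG0').mp hIdvd)
        · rwa [prodeq I hI0 hIsf]
      · intro T hT
        obtain ⟨hTsub, hTN⟩ := Finset.mem_filter.mp hT
        rw [Finset.mem_powerset] at hTsub
        have h0 : T.prod id ≠ 0 :=
          Finset.prod_ne_zero_iff.mpr fun P hP => (hFprime P (hTsub hP)).ne_zero
        have hsf : Squarefree (T.prod id) := by
          rw [squarefree_iff_nodup_normalizedFactors h0, factors_of_prod T hTsub]
          exact T.nodup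
        refine Finset.mem_filter.mpr ⟨hsetfin.mem_toFinset.mpr ⟨?_, ?_, hTN⟩, hsf⟩
        · rwa [← Submodule.zero_eq_bot]
        · exact Finset.prod_primes_dvd G (fun P hP => hFprime P (hTsub hP))
            (fun P hP => hFdvdG P (hTsub hP))
      · intro I hI
        obtain ⟨hImem, hIsf⟩ := Finset.mem_filter.mp hI
        obtain ⟨hIne, _, _⟩ := hsetfin.mem_toFinset.mp hImem
        exact prodeq I (by rwa [Submodule.zero_eq_bot]) hIsf
      · intro T hT
        obtain ⟨hTsub, _⟩ := Finset.mem_filter.mp hT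
        rw [Finset.mem_powerset] at hTsub
        show (normalizedFactors (T.prod id)).toFinset = T
        rw [factors_of_prod T hTsub]
        exact Finset.val_toFinset T
      · intro I hI
        obtain ⟨hImem, hIsf⟩ := Finset.mem_filter.mp hI
        obtain ⟨hIne, _, _⟩ := hsetfin.mem_toFinset.mp hImem
        have hI0 : I ≠ 0 := by rwa [Submodule.zero_eq_bot]
        have hnd : (normalizedFactors I).Nodup :=
          (squarefree_iff_nodup_normalizedFactors hI0).mp hIsf
        show muK I = (-1 : ℤ) ^ (normalizedFactors I).toFinset.card
        rw [muK, if_pos hIsf, Multiset.toFinset_card_of_nodup hnd]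
    have step2 : ∀ T ∈ F.powerset,
        ((d ∣ Ideal.absNorm (T.prod id)) ↔ (∀ q ∈ d.primeFactors, ∃ P ∈ T, π P = q)) := by
      intro T hT
      rw [Finset.mem_powerset] at hT
      have hprod : Ideal.absNorm (T.prod id) = ∏ P ∈ T, Ideal.absNorm P := by
        simpa using map_prod Ideal.absNorm id T
      constructor
      · intro hdvd q hqQ
        have hq : q.Prime := Nat.prime_of_mem_primeFactors hqQ
        have : q ∣ ∏ P ∈ T, Ideal.absNorm P := by
          rw [← hprod]; exact dvd_trans (Nat.dvd_of_mem_primeFactors hqQ) hdvd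
        obtain ⟨P, hPT, hPq⟩ := (Prime.dvd_finset_prod_iff hq.prime _).mp this
        exact ⟨P, hPT, (hπ_spec P (hT hPT) q hq).mp hPq⟩
      · intro hall
        rw [← Nat.prod_primeFactors_of_squarefree hsq]
        apply Finset.prod_primes_dvd
        · exact fun q hq => (Nat.prime_of_mem_primeFactors hq).prime
        · intro q hq
          obtain ⟨P, hPT, hPq⟩ := hall q hq
          have := (hπ_spec P (hT hPT) q (Nat.prime_of_mem_primeFactors hq)).mpr hPq
          calc (q:ℕ) ∣ Ideal.absNorm P := this
            _ ∣ Ideal.absNorm (T.prod id) := by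
                rw [hprod]; exact Finset.dvd_prod_of_mem _ hPT
    have step3 : (∀ q ∈ d.primeFactors, ∃ P ∈ F, π P = q) ↔ d ∣ Ideal.absNorm J := by
      constructor
      · intro hall
        rw [← Nat.prod_primeFactors_of_squarefree hsq]
        apply Finset.prod_primes_dvd
        · exact fun q hq => (Nat.prime_of_mem_primeFactors hq).prime
        · intro q hq
          obtain ⟨P, hPF, hPq⟩ := hall q hq
          have h1 : q ∣ Ideal.absNorm P :=
            (hπ_spec P hPF q (Nat.prime_of_mem_primeFactors hq)).mpr hPq
          exact dvd_trans h1 (Ideal.absNorm_dvd_absNorm_of_le (Ideal.le_of_dvd (dvd_trans (hFdvdG P hPF) hGJ)))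
      · intro hdvd q hqQ
        have hq : q.Prime := Nat.prime_of_mem_primeFactors hqQ
        have hqJ : q ∣ Ideal.absNorm J := dvd_trans (Nat.dvd_of_mem_primeFactors hqQ) hdvd
        have hJ0 : J ≠ 0 := by rwa [Submodule.zero_eq_bot]
        -- find prime ideal of J whose norm is divisible by q
        have hfact : Ideal.absNorm J
            = ((normalizedFactors J).map (fun P => Ideal.absNorm P)).prod := by
          conv_lhs => rw [← associated_iff_eq.mp (prod_normalizedFactors hJ0)]
          rw [map_multiset_prod]
        rw [hfact] at hqJ
        obtain ⟨a, haM, hqa⟩ := hq.prime.exists_mem_multiset_dvd hqJ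
        obtain ⟨P, hPJ, rfl⟩ := Multiset.mem_map.mp haM
        have hPprimeI : Prime P := prime_of_normalized_factor P hPJ
        have hPne : P ≠ ⊥ := by
          have := hPprimeI.ne_zero; rwa [Submodule.zero_eq_bot] at this
        have hqmem : (q : 𝓞 K) ∈ P :=
          natCast_mem_of_prime_dvd_absNorm' (Ideal.isPrime_of_prime hPprimeI) hPne hq hqa
        have hdmem : (d : 𝓞 K) ∈ P := by
          obtain ⟨m, rfl⟩ := Nat.dvd_of_mem_primeFactors hqQ
          push_cast
          exact P.mul_mem_right _ hqmem
        have hPG : P ∣ G := by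
          rw [Ideal.dvd_iff_le, hGdef, sup_le_iff]
          constructor
          · exact Ideal.le_of_dvd (dvd_of_mem_normalizedFactors hPJ)
          · rwa [Ideal.span_singleton_le_iff_mem]
        have hPF : P ∈ F := by
          rw [hFdef, Multiset.mem_toFinset, mem_normalizedFactors_iff hG0']
          exact ⟨hPprimeI, hPG⟩
        exact ⟨P, hPF, (hπ_spec P hPF q hq).mp hqa⟩
    rw [step1, Finset.sum_congr rfl (fun T hT => by rw [if_congr (step2 T hT) rfl rfl]),
      lemA' d.primeFactors F π hπQ, if_congr step3 rfl rfl]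
  -- conclude
  have hμ : (ArithmeticFunction.moebius d : ℤ) = (-1 : ℤ) ^ d.primeFactors.card := by
    rw [ArithmeticFunction.moebius_apply_of_squarefree hsq]
    congr 1
    rw [ArithmeticFunction.cardFactors_apply, Nat.primeFactors, List.card_toFinset,
      List.Nodup.dedup ((Nat.squarefree_iff_nodup_primeFactorsList hd0).mp hsq)]
  constructor
  · intro hdvd
    rw [hS, if_pos hdvd, hμ, ← pow_add]
    exact Even.neg_one_pow ⟨d.primeFactors.card, rfl⟩
  · intro hdvd
    rw [hS, if_neg hdvd, mul_zero]
end
end
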